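/- arXiv:2204.02391 — 6 statements merged into one kernel-verified Lean document; each statement's English description precedes it below -/
import Mathlib

section
/- For positive integers m, n ≥ 3 with gcd(m,n) = 1 and n odd, let a(i,j) be the unique integer in [1, mn] congruent to i mod m and j mod n, and suppose a(-2,0) < a(0,-2). Then n - 2 - 2·⌊a(-2,0)/m⌋ = a(0,-4)/m, i.e., m divides a(0,-4) and the identity holds. -/
/-- For coprime `m, n ≥ 3` with `n` odd and `a(-2,0) < a(0,-2)`:
`m ∣ a(0,-4)` and `n - 2 - 2·⌊a(-2,0)/m⌋ = a(0,-4)/m`. -/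
theorem stmt_9 (m n : ℤ) (hm : 3 ≤ m) (hn : 3 ≤ n) (hmn : IsCoprime m n)
    (hodd : Odd n)
    (a20 a02 a04 : ℤ)
    (h1 : a20 ≡ -2 [ZMOD m]) (h2 : a20 ≡ 0 [ZMOD n])
    (h3 : 1 ≤ a20) (h4 : a20 ≤ m * n)
    (h5 : a02 ≡ 0 [ZMOD m]) (h6 : a02 ≡ -2 [ZMOD n])
    (h7 : 1 ≤ a02) (h8 : a02 ≤ m * n)
    (h9 : a04 ≡ 0 [ZMOD m]) (h10 : a04 ≡ -4 [ZMOD n])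
    (h11 : 1 ≤ a04) (h12 : a04 ≤ m * n)
    (hlt : a20 < a02) :
    m ∣ a04 ∧ n - 2 - 2 * ⌊(a20 : ℚ) / (m : ℚ)⌋ = a04 / m := by
  have hm0 : (0:ℤ) < m := by linarith
  have hn0 : (0:ℤ) < n := by linarith
  -- basic divisibilities
  have hma : m ∣ a20 + 2 := by
    have h := h1.dvd
    rw [show (-2 : ℤ) - a20 = -(a20 + 2) by ring] at h
    exact (dvd_neg).mp h
  have hna : n ∣ a20 := by
    have h := h2.dvd
    rw [show (0 : ℤ) - a20 = -a20 by ring] at h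
    exact (dvd_neg).mp h
  have hmb : m ∣ a02 := by
    have h := h5.dvd
    rw [show (0 : ℤ) - a02 = -a02 by ring] at h
    exact (dvd_neg).mp h
  have hnb : n ∣ a02 + 2 := by
    have h := h6.dvd
    rw [show (-2 : ℤ) - a02 = -(a02 + 2) by ring] at h
    exact (dvd_neg).mp h
  have hmc : m ∣ a04 := by
    have h := h9.dvd
    rw [show (0 : ℤ) - a04 = -a04 by ring] at h
    exact (dvd_neg).mp h
  have hnc : n ∣ a04 + 4 := by
    have h := h10.dvd
    rw [show (-4 : ℤ) - a04 = -(a04 + 4) by ring] at h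
    exact (dvd_neg).mp h
  -- q : a20 + 2 = m * q
  obtain ⟨q, hq⟩ := hma
  have hq1 : 1 ≤ q := by nlinarith
  have hqn : q ≤ n := by nlinarith
  -- m*n ∣ a20 + a02 + 2
  have hsum : m * n ∣ a20 + a02 + 2 := by
    apply hmn.mul_dvd
    · obtain ⟨u, hu⟩ := hmb
      exact ⟨q + u, by linarith [hq, hu]⟩
    · obtain ⟨v, hv⟩ := hna
      obtain ⟨w, hw⟩ := hnb
      exact ⟨v + w, by linarith [hv, hw]⟩
  obtain ⟨k, hk⟩ := hsum
  have hmn9 : 9 ≤ m * n := by nlinarith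
  have hk1 : k = 1 ∨ k = 2 := by
    have hk0 : 1 ≤ k := by nlinarith
    have hk2 : k ≤ 2 := by nlinarith
    omega
  -- rule out k = 2
  have hk1' : k = 1 := by
    rcases hk1 with h | h
    · exact h
    · exfalso
      subst h
      -- a20 + a02 = 2mn - 2, so a20 ≥ mn - 2
      have hge : m * n - 2 ≤ a20 := by linarith
      obtain ⟨j, hj⟩ := hna
      have hjm : j = m := by nlinarith
      have h20 : a20 = m * n := by rw [hj, hjm]; ring
      have h2' : m ∣ (2:ℤ) := ⟨q - n, by rw [mul_sub]; linarith⟩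
      have := Int.le_of_dvd (by norm_num) h2'
      linarith
  subst hk1'
  have hsum' : a20 + a02 = m * n - 2 := by linarith
  -- 2q ≤ n - 1
  have h2q : 2 * q ≤ n - 1 := by
    have hlt2 : 2 * a20 < m * n - 2 := by linarith
    have : 2 * q < n + 1 := by nlinarith
    have hne : 2 * q ≠ n := by
      obtain ⟨r, hr⟩ := hodd
      omega
    omega
  -- identify a04 = m * (n - 2*q)
  have key : a04 = m * (n - 2 * q) := by
    have hd1 : m ∣ a04 - m * (n - 2 * q) := by
      obtain ⟨u, hu⟩ := hmc
      exact ⟨u - (n - 2 * q), by linarith [hu, mul_sub m u (n - 2*q)]⟩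
    have hd2 : n ∣ a04 - m * (n - 2 * q) := by
      obtain ⟨v, hv⟩ := hna
      obtain ⟨w, hw⟩ := hnc
      refine ⟨w - m + 2 * v, ?_⟩
      have : m * (n - 2 * q) = m * n - 2 * (a20 + 2) := by rw [hq]; ring
      rw [this, hv] at *
      nlinarith [hw, hv]
    have hdd : m * n ∣ a04 - m * (n - 2 * q) := hmn.mul_dvd hd1 hd2
    obtain ⟨t, ht⟩ := hdd
    have hcl : m ≤ m * (n - 2 * q) := by nlinarith
    have hcu : m * (n - 2 * q) ≤ m * n := by nlinarith
    have ht0 : t = 0 := by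
      rcases lt_trichotomy t 0 with h | h | h
      · have : t ≤ -1 := by omega
        nlinarith
      · exact h
      · have : 1 ≤ t := by omega
        nlinarith
    rw [ht0, mul_zero] at ht
    linarith
  constructor
  · exact hmc
  · -- floor computation
    have haq : a20 = m * q - 2 := by linarith
    have hfl : ⌊(a20 : ℚ) / (m : ℚ)⌋ = q - 1 := by
      have hmQ : (0:ℚ) < (m:ℚ) := by exact_mod_cast hm0
      have hmQ3 : (3:ℚ) ≤ (m:ℚ) := by exact_mod_cast hm
      have haQ : (a20:ℚ) = (m:ℚ) * (q:ℚ) - 2 := by exact_mod_cast haq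
      rw [Int.floor_eq_iff]
      constructor
      · rw [le_div_iff₀ hmQ]
        push_cast
        have hexp : ((q:ℚ) - 1) * (m:ℚ) = (m:ℚ) * (q:ℚ) - (m:ℚ) := by ring
        rw [hexp]
        linarith
      · rw [div_lt_iff₀ hmQ]
        push_cast
        have hexp : ((q:ℚ) - 1 + 1) * (m:ℚ) = (m:ℚ) * (q:ℚ) := by ring
        rw [hexp]
        linarith
    rw [hfl, key, Int.mul_ediv_cancel_left _ (ne_of_gt hm0)]
    ring
end

section
/- In the Cartesian product digraph C⃗_m □ C⃗_n of two directed cycles with m, n ≥ 2, identified with the abelian group Z_m × Z_n where each vertex v has out-neighbors v+(1,0) and v+(0,1): for every nonidentity subgroup coset structure, every coset of the subgroup generated by (1,-1) intersects the rectangle R = {0,1} × {0,1} whenever the digraph obtained by deleting R admits a vertex-disjoint cycle cover. Equivalently: if H is a spanning subdigraph of (C⃗_m □ C⃗_n) ∖ R in which every vertex has in-degree and out-degree 1, then every coset of ⟨(1,-1)⟩ in Z_m × Z_n contains an element of R. -/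
/-- If `H` is a vertex-disjoint cycle cover of `(C⃗_m □ C⃗_n) ∖ R_{2,2}` (every
vertex outside `R = {0,1} × {0,1}` has in-degree and out-degree 1, and edges go
from `u` to `u+(1,0)` or `u+(0,1)`), then every coset of the subgroup generated
by `(1,-1)` in `ZMod m × ZMod n` contains an element of `R`. -/
theorem stmt_13 (m n : ℕ) (hm : 2 ≤ m) (hn : 2 ≤ n)
    (R : Set (ZMod m × ZMod n))
    (hR : R = {v | (v.1 = 0 ∨ v.1 = 1) ∧ (v.2 = 0 ∨ v.2 = 1)})
    (H : (ZMod m × ZMod n) → (ZMod m × ZMod n) → Prop)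
    (hEdge : ∀ u v, H u v → u ∉ R ∧ v ∉ R ∧ (v = u + (1, 0) ∨ v = u + (0, 1)))
    (hOut : ∀ u, u ∉ R → ∃! v, H u v)
    (hIn : ∀ v, v ∉ R → ∃! u, H u v) :
    ∀ v : ZMod m × ZMod n, ∃ k : ℤ, v + k • ((1 : ZMod m), (-1 : ZMod n)) ∈ R := by
  classical
  haveI : NeZero m := ⟨by omega⟩
  haveI : NeZero n := ⟨by omega⟩
  set d := Nat.gcd m n with hd
  have hdm : d ∣ m := Nat.gcd_dvd_left m n
  have hdn : d ∣ n := Nat.gcd_dvd_right m n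
  haveI : NeZero d := ⟨Nat.gcd_ne_zero_left (by omega)⟩
  set ψ : ZMod m × ZMod n → ZMod d := fun w =>
    ZMod.castHom hdm (ZMod d) w.1 + ZMod.castHom hdn (ZMod d) w.2 with hψ
  -- ψ of a difference
  have hψsub : ∀ a b : ZMod m × ZMod n, ψ (a - b) = ψ a - ψ b := by
    intro a b
    simp only [hψ, Prod.fst_sub, Prod.snd_sub, map_sub]
    ring
  -- edge step: ψ advances by 1
  have hstep : ∀ u v, H u v → ψ v = ψ u + 1 := by
    intro u v huv
    rcases (hEdge u v huv).2.2 with h | h <;> subst h <;>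
      simp only [hψ, Prod.fst_add, Prod.snd_add, map_add, map_one, map_zero] <;> ring
  -- kernel of ψ is generated by (1,-1)
  have hker : ∀ w : ZMod m × ZMod n, ψ w = 0 →
      ∃ k : ℤ, w = k • ((1 : ZMod m), (-1 : ZMod n)) := by
    intro w hw
    set a := w.1.val with ha
    set b := w.2.val with hb
    have hwa : (a : ZMod m) = w.1 := by simp [ha, ZMod.natCast_val, ZMod.cast_id]
    have hwb : (b : ZMod n) = w.2 := by simp [hb, ZMod.natCast_val, ZMod.cast_id]
    have h0 : ((a + b : ℕ) : ZMod d) = 0 := by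
      have h' : ψ w = ((a : ZMod d) + (b : ZMod d)) := by
        simp only [hψ]
        rw [← hwa, ← hwb]
        simp [map_natCast]
      push_cast
      rw [← h', hw]
    have hdvd : d ∣ a + b := (ZMod.natCast_eq_zero_iff _ _).1 h0
    obtain ⟨c, hc⟩ := hdvd
    set A := Nat.gcdA m n with hA
    set B := Nat.gcdB m n with hB
    have hbez : (d : ℤ) = m * A + n * B := Nat.gcd_eq_gcd_ab m n
    refine ⟨(a : ℤ) - m * (c * A), ?_⟩
    have hk2 : (a : ℤ) - m * (c * A) = -(b : ℤ) + n * (c * B) := by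
      have : (a : ℤ) + b = d * c := by exact_mod_cast hc
      have := hbez
      nlinarith [hbez, this]
    have h1 : (((a : ℤ) - m * (c * A) : ℤ) : ZMod m) = w.1 := by
      push_cast
      simp [ZMod.natCast_self, hwa]
    have h2 : (((a : ℤ) - m * (c * A) : ℤ) : ZMod n) = -w.2 := by
      rw [hk2]
      push_cast
      simp [ZMod.natCast_self, hwb]
    have hs : (((a : ℤ) - m * (c * A)) • ((1 : ZMod m), (-1 : ZMod n)) : ZMod m × ZMod n)
        = (w.1, w.2) := by
      rw [Prod.smul_mk, zsmul_eq_mul, zsmul_eq_mul, mul_one, mul_neg_one, h1, h2, neg_neg]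
    rw [hs]
  -- the out-neighbor function
  set nxt : (ZMod m × ZMod n) → (ZMod m × ZMod n) := fun u =>
    if h : u ∉ R then (hOut u h).choose else u with hnxtdef
  have hnxt : ∀ u, u ∉ R → H u (nxt u) := by
    intro u hu
    simp only [hnxtdef, dif_pos hu]
    exact (hOut u hu).choose_spec.1
  -- counting
  set Bc : ZMod d → ℕ := fun j =>
    (Finset.univ.filter (fun w : ZMod m × ZMod n => ψ w = j ∧ w ∈ R)).card with hBc
  set Ac : ZMod d → ℕ := fun j =>
    (Finset.univ.filter (fun w : ZMod m × ZMod n => ψ w = j ∧ w ∉ R)).card with hAc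
  set Fc : ZMod d → ℕ := fun j =>
    (Finset.univ.filter (fun w : ZMod m × ZMod n => ψ w = j)).card with hFc
  have hsplit : ∀ j, Bc j + Ac j = Fc j := by
    intro j
    rw [hBc, hAc, hFc]
    have := Finset.card_filter_add_card_filter_not
      (s := Finset.univ.filter (fun w : ZMod m × ZMod n => ψ w = j))
      (p := fun w => w ∈ R)
    rw [Finset.filter_filter, Finset.filter_filter] at this
    convert this using 3
  have hA : ∀ j, Ac j = Ac (j + 1) := by
    intro j
    rw [hAc]
    refine Finset.card_bij (fun u _ => nxt u) ?_ ?_ ?_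
    · intro u hu
      simp only [Finset.mem_filter, Finset.mem_univ, true_and] at hu ⊢
      have hH := hnxt u hu.2
      refine ⟨?_, (hEdge _ _ hH).2.1⟩
      rw [hstep u _ hH, hu.1]
    · intro u₁ hu₁ u₂ hu₂ heq
      simp only [Finset.mem_filter, Finset.mem_univ, true_and] at hu₁ hu₂
      have h1 := hnxt u₁ hu₁.2
      have h2 := hnxt u₂ hu₂.2
      have heq' : nxt u₁ = nxt u₂ := heq
      rw [heq'] at h1
      exact (hIn _ (hEdge _ _ h2).2.1).unique h1 h2
    · intro v hv
      simp only [Finset.mem_filter, Finset.mem_univ, true_and] at hv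
      obtain ⟨u, hu⟩ := (hIn v hv.2).exists
      have huR : u ∉ R := (hEdge _ _ hu).1
      have hψu : ψ u = j := by
        have := hstep u v hu
        rw [hv.1] at this
        exact add_right_cancel this.symm
      refine ⟨u, by simp [Finset.mem_filter, hψu, huR], ?_⟩
      exact (hOut u huR).unique (hnxt u huR) hu
  have hF : ∀ j, Fc j = Fc (j + 1) := by
    intro j
    rw [hFc]
    refine Finset.card_bij (fun u _ => u + (1, 0)) ?_ ?_ ?_
    · intro u hu
      simp only [Finset.mem_filter, Finset.mem_univ, true_and] at hu ⊢
      simp only [hψ] at hu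
      simp only [hψ, Prod.fst_add, Prod.snd_add, map_add, map_one, map_zero]
      linear_combination hu
    · intro u₁ _ u₂ _ heq
      exact add_right_cancel heq
    · intro v hv
      simp only [Finset.mem_filter, Finset.mem_univ, true_and] at hv ⊢
      refine ⟨v - (1, 0), ?_, by ring⟩
      simp only [hψ] at hv
      simp only [hψ, Prod.fst_sub, Prod.snd_sub, map_sub, map_one, map_zero]
      linear_combination hv
  have hBstep : ∀ j, Bc j = Bc (j + 1) := by
    intro j
    have h1 := hsplit j
    have h2 := hsplit (j + 1)
    have h3 := hA j
    have h4 := hF j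
    omega
  have hBnat : ∀ k : ℕ, Bc (k : ZMod d) = Bc 0 := by
    intro k
    induction k with
    | zero => simp
    | succ k ih =>
      push_cast
      rw [← hBstep, ih]
  have hBall : ∀ j : ZMod d, Bc j = Bc 0 := by
    intro j
    have : ((j.val : ℕ) : ZMod d) = j := by
      simp [ZMod.natCast_val, ZMod.cast_id]
    rw [← this, hBnat]
  have hB0 : 0 < Bc 0 := by
    rw [hBc]
    refine Finset.card_pos.2 ⟨(0, 0), ?_⟩
    simp only [Finset.mem_filter, Finset.mem_univ, true_and]
    constructor
    · simp [hψ]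
    · rw [hR]; exact ⟨Or.inl rfl, Or.inl rfl⟩
  intro v
  have hpos : 0 < Bc (ψ v) := by rw [hBall]; exact hB0
  rw [hBc] at hpos
  obtain ⟨r, hr⟩ := Finset.card_pos.1 hpos
  simp only [Finset.mem_filter, Finset.mem_univ, true_and] at hr
  obtain ⟨k, hk⟩ := hker (r - v) (by rw [hψsub, hr.1, sub_self])
  refine ⟨k, ?_⟩
  rw [← hk]
  simpa using hr.2
end

section
/- The digraph (C⃗_m □ C⃗_n) ∖ R_{2,2} obtained from the Cartesian product of directed cycles of lengths m, n ≥ 2 by deleting the four vertices {0,1}×{0,1} has at most one vertex-disjoint cycle cover. -/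
namespace Stmt14Aux

variable {m n : ℕ}

lemma pair_arith1 (u : ZMod m × ZMod n) : u + (1, -1) + (0, 1) = u + (1, 0) := by
  rw [add_assoc]; congr 1; rw [Prod.mk_add_mk]; norm_num

lemma pair_arith2 (u : ZMod m × ZMod n) : u + (1, 0) - (0, 1) = u + (1, -1) := by
  rw [add_sub_assoc]; congr 1; rw [Prod.mk_sub_mk]; norm_num

lemma step (hm : 2 ≤ m)
    (R : Set (ZMod m × ZMod n))
    (A B : (ZMod m × ZMod n) → (ZMod m × ZMod n) → Prop)
    (hEA : ∀ u v, A u v → u ∉ R ∧ v ∉ R ∧ (v = u + (1, 0) ∨ v = u + (0, 1)))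
    (hOA : ∀ u, u ∉ R → ∃! v, A u v)
    (hIA : ∀ v, v ∉ R → ∃! u, A u v)
    (hEB : ∀ u v, B u v → u ∉ R ∧ v ∉ R ∧ (v = u + (1, 0) ∨ v = u + (0, 1)))
    (hOB : ∀ u, u ∉ R → ∃! v, B u v)
    (hIB : ∀ v, v ∉ R → ∃! u, B u v)
    (u : ZMod m × ZMod n)
    (hA : A u (u + (1, 0))) (hB : B u (u + (0, 1))) :
    A (u + (1, -1)) (u + (1, -1) + (1, 0)) ∧ B (u + (1, -1)) (u + (1, -1) + (0, 1)) := by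
  haveI : Fact (1 < m) := ⟨hm⟩
  have hone : (1 : ZMod m) ≠ 0 := one_ne_zero
  have hu : u ∉ R := (hEA u _ hA).1
  have hv : u + (1, 0) ∉ R := (hEA u _ hA).2.1
  -- the in-edge of v := u + (1,0) in B
  obtain ⟨u', hu', huniq'⟩ := hIB (u + (1, 0)) hv
  have hu'R : u' ∉ R := (hEB u' _ hu').1
  have hne10 : u + (1, 0) ≠ u + (0, 1) := by
    intro h
    have h3 := add_left_cancel h
    exact hone (by simpa using congrArg Prod.fst h3)
  have hu'eq : u' = u + (1, -1) := by
    rcases (hEB u' _ hu').2.2 with h | h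
    · -- u + (1,0) = u' + (1,0) forces u' = u, contradiction with B u (u+(0,1))
      exfalso
      have huu : u' = u := add_right_cancel (a := u') (b := ((1 : ZMod m), (0 : ZMod n))) h.symm
      subst huu
      obtain ⟨w, _, hwu⟩ := hOB u' hu'R
      exact hne10 ((hwu _ hu').trans (hwu _ hB).symm)
    · -- u + (1,0) = u' + (0,1)
      have := eq_sub_of_add_eq h.symm
      rw [pair_arith2] at this
      exact this
  subst hu'eq
  have hBside : B (u + (1, -1)) (u + (1, -1) + (0, 1)) := by
    rw [pair_arith1]; exact hu'
  refine ⟨?_, hBside⟩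
  obtain ⟨w, hw, _⟩ := hOA (u + (1, -1)) hu'R
  rcases (hEA _ _ hw).2.2 with h | h
  · rw [← h]; exact hw
  · exfalso
    rw [h, pair_arith1] at hw
    obtain ⟨z, _, hzu⟩ := hIA (u + (1, 0)) hv
    have h1 : u + (1, -1) = u := (hzu _ hw).trans (hzu _ hA).symm
    have h3 := add_eq_left.mp h1
    exact hone (by simpa using congrArg Prod.fst h3)


lemma gcd3 (hm : 2 ≤ m) (hn : 2 ≤ n)
    (R : Set (ZMod m × ZMod n))
    (hR : R = {v | (v.1 = 0 ∨ v.1 = 1) ∧ (v.2 = 0 ∨ v.2 = 1)})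
    (A : (ZMod m × ZMod n) → (ZMod m × ZMod n) → Prop)
    (hEA : ∀ u v, A u v → u ∉ R ∧ v ∉ R ∧ (v = u + (1, 0) ∨ v = u + (0, 1)))
    (hOA : ∀ u, u ∉ R → ∃! v, A u v)
    (hIA : ∀ v, v ∉ R → ∃! u, A u v)
    (hg : 3 ≤ Nat.gcd m n) : False := by
  classical
  set g := Nat.gcd m n with hgdef
  haveI : NeZero m := ⟨by omega⟩
  haveI : NeZero n := ⟨by omega⟩
  haveI : NeZero g := ⟨by omega⟩
  have hgm : g ∣ m := Nat.gcd_dvd_left m n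
  have hgn : g ∣ n := Nat.gcd_dvd_right m n
  have hm3 : 3 ≤ m := le_trans hg (Nat.le_of_dvd (by omega) hgm)
  -- useful facts about ZMod g
  have hg1 : (1 : ZMod g) ≠ 0 := by
    intro h
    rw [show ((1 : ZMod g)) = ((1 : ℕ) : ZMod g) by norm_num,
      ZMod.natCast_eq_zero_iff] at h
    have := Nat.le_of_dvd (by omega) h
    omega
  have hg2 : (2 : ZMod g) ≠ 0 := by
    intro h
    rw [show ((2 : ZMod g)) = ((2 : ℕ) : ZMod g) by norm_num,
      ZMod.natCast_eq_zero_iff] at h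
    have := Nat.le_of_dvd (by omega) h
    omega
  have hm1 : (1 : ZMod m) ≠ 0 := by
    intro h
    rw [show ((1 : ZMod m)) = ((1 : ℕ) : ZMod m) by norm_num,
      ZMod.natCast_eq_zero_iff] at h
    have := Nat.le_of_dvd (by omega) h
    omega
  have hm2 : (2 : ZMod m) ≠ 0 := by
    intro h
    rw [show ((2 : ZMod m)) = ((2 : ℕ) : ZMod m) by norm_num,
      ZMod.natCast_eq_zero_iff] at h
    have := Nat.le_of_dvd (by omega) h
    omega
  -- the fiber map
  set φ : ZMod m × ZMod n → ZMod g :=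
    fun v => ZMod.castHom hgm (ZMod g) v.1 + ZMod.castHom hgn (ZMod g) v.2 with hφ
  have hstep : ∀ u v, A u v → φ v = φ u + 1 := by
    intro u v huv
    rcases (hEA u v huv).2.2 with h | h <;> subst h <;> rw [hφ] <;>
      simp only [Prod.fst_add, Prod.snd_add, map_add, map_one, map_zero] <;> ring
  -- the out-neighbour function
  have hfex : ∀ u : ZMod m × ZMod n, ∃ v, u ∉ R → A u v := by
    intro u
    by_cases h : u ∉ R
    · obtain ⟨v, hv, _⟩ := hOA u h
      exact ⟨v, fun _ => hv⟩
    · exact ⟨u, fun h' => absurd h' h⟩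
  choose f hf using hfex
  -- fibers minus R
  set T : ZMod g → Finset (ZMod m × ZMod n) :=
    fun s => Finset.univ.filter (fun v => v ∉ R ∧ φ v = s) with hT
  have hmemT : ∀ s v, v ∈ T s ↔ (v ∉ R ∧ φ v = s) := by
    intro s v
    rw [hT]
    simp
  -- T 0 injects into T 1
  have mono : (T 0).card ≤ (T 1).card := by
    apply Finset.card_le_card_of_injOn f
    · intro u hu
      rw [Finset.mem_coe, hmemT] at hu ⊢
      have hA := hf u hu.1
      exact ⟨(hEA u _ hA).2.1, by rw [hstep u _ hA, hu.2, zero_add]⟩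
    · intro u₁ h₁ u₂ h₂ hff
      have h₁' := (hmemT 0 u₁).mp h₁
      have h₂' := (hmemT 0 u₂).mp h₂
      have hA₁ := hf u₁ h₁'.1
      have hA₂ := hf u₂ h₂'.1
      rw [hff] at hA₁
      obtain ⟨z, _, hz⟩ := hIA (f u₂) (hEA u₂ _ hA₂).2.1
      exact (hz _ hA₁).trans (hz _ hA₂).symm
  -- but T 1 is strictly smaller than T 0
  have hstrict : (T 1).card < (T 0).card := by
    set j : ZMod m × ZMod n → ZMod m × ZMod n := fun v => (v.1 - 1, v.2) with hj
    have hjinj : Set.InjOn j (T 1) := by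
      intro a _ b _ hab
      simp only [hj, Prod.mk.injEq] at hab
      exact Prod.ext (by linear_combination hab.1) hab.2
    have hmaps : ∀ v ∈ T 1, j v ∈ T 0 := by
      intro v hv
      rw [hmemT] at hv ⊢
      obtain ⟨hvR, hφv⟩ := hv
      rw [hφ] at hφv
      simp only at hφv
      constructor
      · -- j v ∉ R
        intro hjR
        rw [hR] at hjR hvR
        simp only [hj, Set.mem_setOf_eq] at hjR hvR
        obtain ⟨h1, h2⟩ := hjR
        have hv1 : v.1 = 2 := by
          rcases h1 with h1 | h1
          · exact absurd ⟨Or.inr (by linear_combination h1), h2⟩ hvR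
          · linear_combination h1
        rw [hv1] at hφv
        rcases h2 with h2 | h2 <;> rw [h2] at hφv <;>
          simp only [map_ofNat, map_zero, map_one, add_zero] at hφv
        · exact hg1 (by linear_combination hφv)
        · exact hg2 (by linear_combination hφv)
      · rw [hφ]
        simp only [hj, map_sub, map_one]
        linear_combination hφv
    have hE : ((-1 : ZMod m), (1 : ZMod n)) ∈ T 0 := by
      rw [hmemT]
      constructor
      · rw [hR]
        simp only [Set.mem_setOf_eq]
        rintro ⟨h1 | h1, -⟩
        · exact hm1 (by linear_combination -h1)
        · exact hm2 (by linear_combination -h1)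
      · rw [hφ]
        simp only [map_neg, map_one]
        ring
    have hEnotim : ((-1 : ZMod m), (1 : ZMod n)) ∉ (T 1).image j := by
      intro hmem
      rw [Finset.mem_image] at hmem
      obtain ⟨v, hv, hjv⟩ := hmem
      rw [hmemT] at hv
      simp only [hj, Prod.mk.injEq] at hjv
      apply hv.1
      rw [hR]
      exact ⟨Or.inl (by linear_combination hjv.1), Or.inr hjv.2⟩
    calc (T 1).card = ((T 1).image j).card := (Finset.card_image_of_injOn hjinj).symm
      _ < (T 0).card := by
          apply Finset.card_lt_card
          rw [Finset.ssubset_iff_of_subset]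
          · exact ⟨_, hE, hEnotim⟩
          · intro x hx
            rw [Finset.mem_image] at hx
            obtain ⟨v, hv, hjv⟩ := hx
            rw [← hjv]
            exact hmaps v hv
  omega


lemma no_diff (hm : 2 ≤ m) (hn : 2 ≤ n)
    (R : Set (ZMod m × ZMod n))
    (hR : R = {v | (v.1 = 0 ∨ v.1 = 1) ∧ (v.2 = 0 ∨ v.2 = 1)})
    (A B : (ZMod m × ZMod n) → (ZMod m × ZMod n) → Prop)
    (hEA : ∀ u v, A u v → u ∉ R ∧ v ∉ R ∧ (v = u + (1, 0) ∨ v = u + (0, 1)))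
    (hOA : ∀ u, u ∉ R → ∃! v, A u v)
    (hIA : ∀ v, v ∉ R → ∃! u, A u v)
    (hEB : ∀ u v, B u v → u ∉ R ∧ v ∉ R ∧ (v = u + (1, 0) ∨ v = u + (0, 1)))
    (hOB : ∀ u, u ∉ R → ∃! v, B u v)
    (hIB : ∀ v, v ∉ R → ∃! u, B u v)
    (hg : Nat.gcd m n ≤ 2)
    (u : ZMod m × ZMod n)
    (hA : A u (u + (1, 0))) (hB : B u (u + (0, 1))) : False := by
  haveI : NeZero m := ⟨by omega⟩
  haveI : NeZero n := ⟨by omega⟩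
  -- the difference propagates along the diagonal orbit
  have orbit : ∀ k : ℕ,
      A (u + k • ((1 : ZMod m), (-1 : ZMod n))) (u + k • ((1 : ZMod m), (-1 : ZMod n)) + (1, 0)) ∧
      B (u + k • ((1 : ZMod m), (-1 : ZMod n))) (u + k • ((1 : ZMod m), (-1 : ZMod n)) + (0, 1)) := by
    intro k
    induction k with
    | zero => simpa using ⟨hA, hB⟩
    | succ k ih =>
      have hs := step hm R A B hEA hOA hIA hEB hOB hIB _ ih.1 ih.2
      have heq : u + (k + 1) • ((1 : ZMod m), (-1 : ZMod n))
          = u + k • ((1 : ZMod m), (-1 : ZMod n)) + (1, -1) := by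
        rw [succ_nsmul, add_assoc]
      rw [heq]
      exact hs
  -- CRT: some point of the orbit lies in R
  set g := Nat.gcd m n with hgdef
  have hg0 : 0 < g := Nat.gcd_pos_of_pos_left n (by omega)
  have hgm : g ∣ m := Nat.gcd_dvd_left m n
  have hgn : g ∣ n := Nat.gcd_dvd_right m n
  set a := u.1.val with ha
  set b := u.2.val with hb
  have ham : a < m := ZMod.val_lt u.1
  set c := (a + b) % g with hc
  have hc1 : c ≤ 1 := by
    have := Nat.mod_lt (a + b) hg0
    omega
  have hcong : b ≡ m + c - a [MOD Nat.gcd n m] := by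
    rw [Nat.gcd_comm, ← hgdef]
    apply Nat.ModEq.add_right_cancel' a
    have hXa : m + c - a + a = m + c := Nat.sub_add_cancel (by omega)
    rw [hXa]
    have e1 : m ≡ 0 [MOD g] := (Nat.modEq_zero_iff_dvd).mpr hgm
    have e2 : c ≡ a + b [MOD g] := Nat.mod_modEq (a + b) g
    calc b + a = 0 + (a + b) := by omega
      _ ≡ m + c [MOD g] := (e1.add e2).symm
  obtain ⟨k, hk1, hk2⟩ := Nat.chineseRemainder' hcong
  -- compute the point u + k • (1, -1)
  have h1 : ((k : ℕ) : ZMod m) = ((m + c - a : ℕ) : ZMod m) :=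
    (ZMod.natCast_eq_natCast_iff _ _ _).mpr hk2
  have h2 : ((k : ℕ) : ZMod n) = ((b : ℕ) : ZMod n) :=
    (ZMod.natCast_eq_natCast_iff _ _ _).mpr hk1
  have hfst : (u + k • ((1 : ZMod m), (-1 : ZMod n))).1 = ((c : ℕ) : ZMod m) := by
    rw [Prod.fst_add, Prod.smul_fst]
    show u.1 + k • (1 : ZMod m) = ((c : ℕ) : ZMod m)
    rw [nsmul_eq_mul, mul_one, h1, Nat.cast_sub (by omega : a ≤ m + c), Nat.cast_add,
      ZMod.natCast_self, zero_add, ha, ZMod.natCast_zmod_val]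
    ring
  have hsnd : (u + k • ((1 : ZMod m), (-1 : ZMod n))).2 = 0 := by
    rw [Prod.snd_add, Prod.smul_snd]
    show u.2 + k • (-1 : ZMod n) = 0
    rw [nsmul_eq_mul, mul_neg_one, h2, hb, ZMod.natCast_zmod_val]
    ring
  have hmem : u + k • ((1 : ZMod m), (-1 : ZMod n)) ∈ R := by
    rw [hR]
    refine ⟨?_, Or.inl hsnd⟩
    rcases Nat.le_one_iff_eq_zero_or_eq_one.mp hc1 with h | h <;> rw [h] at hfst
    · exact Or.inl (by rw [hfst]; norm_num)
    · exact Or.inr (by rw [hfst]; norm_num)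
  exact (hEA _ _ (orbit k).1).1 hmem


lemma subrel (hm : 2 ≤ m) (hn : 2 ≤ n)
    (R : Set (ZMod m × ZMod n))
    (hR : R = {v | (v.1 = 0 ∨ v.1 = 1) ∧ (v.2 = 0 ∨ v.2 = 1)})
    (A B : (ZMod m × ZMod n) → (ZMod m × ZMod n) → Prop)
    (hEA : ∀ u v, A u v → u ∉ R ∧ v ∉ R ∧ (v = u + (1, 0) ∨ v = u + (0, 1)))
    (hOA : ∀ u, u ∉ R → ∃! v, A u v)
    (hIA : ∀ v, v ∉ R → ∃! u, A u v)
    (hEB : ∀ u v, B u v → u ∉ R ∧ v ∉ R ∧ (v = u + (1, 0) ∨ v = u + (0, 1)))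
    (hOB : ∀ u, u ∉ R → ∃! v, B u v)
    (hIB : ∀ v, v ∉ R → ∃! u, B u v)
    (u v : ZMod m × ZMod n) (hA : A u v) : B u v := by
  rcases le_or_gt (Nat.gcd m n) 2 with hg | hg
  · have huR := (hEA u v hA).1
    obtain ⟨w, hw, -⟩ := hOB u huR
    rcases (hEA u v hA).2.2 with h1 | h1 <;> rcases (hEB u w hw).2.2 with h2 | h2
    · rw [h1, ← h2]; exact hw
    · rw [h1] at hA; rw [h2] at hw
      exact (no_diff hm hn R hR A B hEA hOA hIA hEB hOB hIB hg u hA hw).elim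
    · rw [h1] at hA; rw [h2] at hw
      exact (no_diff hm hn R hR B A hEB hOB hIB hEA hOA hIA hg u hw hA).elim
    · rw [h1, ← h2]; exact hw
  · exact (gcd3 hm hn R hR A hEA hOA hIA (by omega)).elim

end Stmt14Aux

/-- The digraph `(C⃗_m □ C⃗_n) ∖ R_{2,2}` (with `m, n ≥ 2`) has at most one
vertex-disjoint cycle cover: any two spanning subdigraphs in which every vertex
has in-degree 1 and out-degree 1 are equal. -/
theorem stmt_14 (m n : ℕ) (hm : 2 ≤ m) (hn : 2 ≤ n)
    (R : Set (ZMod m × ZMod n))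
    (hR : R = {v | (v.1 = 0 ∨ v.1 = 1) ∧ (v.2 = 0 ∨ v.2 = 1)})
    (H₁ H₂ : (ZMod m × ZMod n) → (ZMod m × ZMod n) → Prop)
    (hEdge₁ : ∀ u v, H₁ u v → u ∉ R ∧ v ∉ R ∧ (v = u + (1, 0) ∨ v = u + (0, 1)))
    (hOut₁ : ∀ u, u ∉ R → ∃! v, H₁ u v)
    (hIn₁ : ∀ v, v ∉ R → ∃! u, H₁ u v)
    (hEdge₂ : ∀ u v, H₂ u v → u ∉ R ∧ v ∉ R ∧ (v = u + (1, 0) ∨ v = u + (0, 1)))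
    (hOut₂ : ∀ u, u ∉ R → ∃! v, H₂ u v)
    (hIn₂ : ∀ v, v ∉ R → ∃! u, H₂ u v) :
    H₁ = H₂ := by
  funext u v
  exact propext ⟨Stmt14Aux.subrel hm hn R hR H₁ H₂ hEdge₁ hOut₁ hIn₁ hEdge₂ hOut₂ hIn₂ u v,
    Stmt14Aux.subrel hm hn R hR H₂ H₁ hEdge₂ hOut₂ hIn₂ hEdge₁ hOut₁ hIn₁ u v⟩
end

section
/- Let m, n ≥ 3 and let H be a vertex-disjoint cycle cover of the digraph (C⃗_m □ C⃗_n) ∖ R_{2,2}. If a vertex v travels by (1,0) (i.e., H contains the edge v → v+(1,0)) and v+(1,-1) ∉ R_{2,2}, then v+(1,-1) also travels by (1,0). -/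
/-- Let `H` be a vertex-disjoint cycle cover of `(C⃗_m □ C⃗_n) ∖ R_{2,2}`
(`m, n ≥ 3`). If `v` travels by `(1,0)` and `v + (1,-1) ∉ R_{2,2}`, then
`v + (1,-1)` also travels by `(1,0)`. -/
theorem stmt_15 (m n : ℕ) (hm : 3 ≤ m) (hn : 3 ≤ n)
    (R : Set (ZMod m × ZMod n))
    (hR : R = {v | (v.1 = 0 ∨ v.1 = 1) ∧ (v.2 = 0 ∨ v.2 = 1)})
    (H : (ZMod m × ZMod n) → (ZMod m × ZMod n) → Prop)
    (hEdge : ∀ u v, H u v → u ∉ R ∧ v ∉ R ∧ (v = u + (1, 0) ∨ v = u + (0, 1)))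
    (hOut : ∀ u, u ∉ R → ∃! v, H u v)
    (hIn : ∀ v, v ∉ R → ∃! u, H u v)
    (v : ZMod m × ZMod n)
    (hv : H v (v + (1, 0)))
    (hnot : v + (1, -1) ∉ R) :
    H (v + (1, -1)) (v + (1, -1) + (1, 0)) := by
  obtain ⟨u, hu, -⟩ := hOut _ hnot
  obtain ⟨-, -, hcase⟩ := hEdge _ _ hu
  rcases hcase with h | h
  · rwa [h] at hu
  · exfalso
    obtain ⟨-, hv10, -⟩ := hEdge _ _ hv
    have heq : v + (1, -1) + (0, 1) = v + (1, 0) := by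
      apply Prod.ext <;> simp
    rw [h, heq] at hu
    obtain ⟨u', -, huniq⟩ := hIn _ hv10
    have h1 := (huniq _ hu).trans (huniq _ hv).symm
    have h2 : v.1 + 1 = v.1 := congrArg Prod.fst h1
    haveI : Fact (1 < m) := ⟨by omega⟩
    exact one_ne_zero (by linear_combination h2)
end

section
/- Let m, n ≥ 3 and let H be a vertex-disjoint cycle cover of (C⃗_m □ C⃗_n) ∖ R_{2,2}. If a vertex v travels by (1,0), and neither v-(1,-1) nor v+(0,1) lies in R_{2,2}, then v-(1,-1) also travels by (1,0). -/
/-- Let `H` be a vertex-disjoint cycle cover of `(C⃗_m □ C⃗_n) ∖ R_{2,2}`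
(`m, n ≥ 3`). If `v` travels by `(1,0)`, and neither `v - (1,-1)` nor
`v + (0,1)` lies in `R_{2,2}`, then `v - (1,-1)` also travels by `(1,0)`. -/
theorem stmt_16 (m n : ℕ) (hm : 3 ≤ m) (hn : 3 ≤ n)
    (R : Set (ZMod m × ZMod n))
    (hR : R = {v | (v.1 = 0 ∨ v.1 = 1) ∧ (v.2 = 0 ∨ v.2 = 1)})
    (H : (ZMod m × ZMod n) → (ZMod m × ZMod n) → Prop)
    (hEdge : ∀ u v, H u v → u ∉ R ∧ v ∉ R ∧ (v = u + (1, 0) ∨ v = u + (0, 1)))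
    (hOut : ∀ u, u ∉ R → ∃! v, H u v)
    (hIn : ∀ v, v ∉ R → ∃! u, H u v)
    (v : ZMod m × ZMod n)
    (hv : H v (v + (1, 0)))
    (h1 : v - (1, -1) ∉ R)
    (h2 : v + (0, 1) ∉ R) :
    H (v - (1, -1)) (v - (1, -1) + (1, 0)) := by
  haveI : Fact (1 < m) := ⟨by omega⟩
  obtain ⟨u, hu, -⟩ := hIn (v + (0, 1)) h2
  obtain ⟨-, -, hcase⟩ := hEdge u _ hu
  have hvR : v ∉ R := (hEdge v _ hv).1
  rcases hcase with h | h
  · have hu' : u = v - (1, -1) := by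
      have := h
      apply_fun (· - ((1 : ZMod m), (0 : ZMod n))) at this
      simp only [add_sub_cancel_right] at this
      rw [← this]
      ext <;> simp <;> try ring
    have heq : v - (1, -1) + (1, 0) = v + (0, 1) := by
      ext <;> simp <;> ring
    rw [heq]
    rwa [hu'] at hu
  · have hu' : u = v := by
      apply_fun (· - ((0 : ZMod m), (1 : ZMod n))) at h
      simp only [add_sub_cancel_right] at h
      exact h.symm
    rw [hu'] at hu
    obtain ⟨w, -, huniq⟩ := hOut v hvR
    have e1 := huniq _ hv
    have e2 := huniq _ hu
    have e3 := e1.trans e2.symm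
    have : (1 : ZMod m) = 0 := by
      have := congrArg Prod.fst e3
      simp at this
    exact absurd this one_ne_zero
end

section
/- For m, n ≥ 3 with gcd(m,n) = 1, the digraph C⃗_m □ C⃗_n (Cartesian product of directed cycles) is not hamiltonian. -/
/-- Edge relation of the Cartesian product `C⃗_m □ C⃗_n` on `ZMod m × ZMod n`. -/
def cpEdge (m n : ℕ) (u v : ZMod m × ZMod n) : Prop :=
  v = u + (1, 0) ∨ v = u + (0, 1)

/-- `E` has a hamiltonian cycle on the vertex set `S`, of length `N`. -/
def HamOn {V : Type} (E : V → V → Prop) (S : Set V) (N : ℕ) : Prop :=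
  ∃ f : ZMod N → V, Function.Injective f ∧ Set.range f = S ∧ ∀ i, E (f i) (f (i + 1))

lemma all_steps_const {N : ℕ} [NeZero N] {V : Type} [AddCommGroup V]
    (f : ZMod N → V) (d : V) (h : ∀ i, f (i + 1) = f i + d) :
    ∀ i, ∃ k : ℕ, f i = f 0 + k • d := by
  have key : ∀ k : ℕ, f (k : ZMod N) = f 0 + k • d := by
    intro k
    induction k with
    | zero => simp
    | succ k ih =>
      push_cast
      rw [h, ih, succ_nsmul, add_assoc]
  intro i
  obtain ⟨k, rfl⟩ := ZMod.natCast_zmod_surjective (n := N) i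
  exact ⟨k, key k⟩

/-- For `m, n ≥ 3` with `gcd(m,n) = 1`, the digraph `C⃗_m □ C⃗_n` is not
hamiltonian. -/
theorem stmt_19 (m n : ℕ) (hm : 3 ≤ m) (hn : 3 ≤ n) (hg : Nat.gcd m n = 1) :
    ¬ HamOn (cpEdge m n) Set.univ (m * n) := by
  classical
  rintro ⟨f, hinj, hrange, hstep⟩
  have hm0 : m ≠ 0 := by omega
  have hn0 : n ≠ 0 := by omega
  haveI : NeZero (m * n) := ⟨by positivity⟩
  haveI : NeZero m := ⟨hm0⟩
  haveI : NeZero n := ⟨hn0⟩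
  haveI : Fact (1 < m) := ⟨by omega⟩
  haveI : Fact (1 < n) := ⟨by omega⟩
  set p : ZMod (m * n) → Prop := fun i => f (i + 1) = f i + (1, 0) with hp
  set x : ℕ := (Finset.univ.filter p).card with hx
  set y : ℕ := (Finset.univ.filter (fun i => ¬ p i)).card with hy
  have hxy : x + y = m * n := by
    rw [hx, hy, Finset.card_filter_add_card_filter_not, Finset.card_univ, ZMod.card]
  -- telescoping sum
  have hsum0 : ∑ i : ZMod (m * n), (f (i + 1) - f i) = 0 := by
    rw [Finset.sum_sub_distrib]
    have : ∑ i : ZMod (m * n), f (i + 1) = ∑ i : ZMod (m * n), f i :=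
      Fintype.sum_equiv (Equiv.addRight 1) (fun i => f (i + 1)) f (fun i => rfl)
    rw [this, sub_self]
  have hsplit : ∑ i : ZMod (m * n), (f (i + 1) - f i)
      = x • ((1 : ZMod m), (0 : ZMod n)) + y • ((0 : ZMod m), (1 : ZMod n)) := by
    rw [← Finset.sum_filter_add_sum_filter_not Finset.univ p]
    congr 1
    · rw [Finset.sum_congr rfl (fun i hi => ?_), Finset.sum_const]
      simp only [Finset.mem_filter] at hi
      rw [hi.2]; abel
    · rw [Finset.sum_congr rfl (fun i hi => ?_), Finset.sum_const]
      simp only [Finset.mem_filter] at hi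
      rcases hstep i with h1 | h2
      · exact absurd h1 hi.2
      · rw [h2]; abel
  rw [hsum0] at hsplit
  have hcomp : x • ((1 : ZMod m), (0 : ZMod n)) + y • ((0 : ZMod m), (1 : ZMod n))
      = ((x : ZMod m), (y : ZMod n)) := by
    rw [Prod.smul_mk, Prod.smul_mk, Prod.mk_add_mk]
    simp [nsmul_eq_mul]
  rw [hcomp] at hsplit
  rw [Prod.ext_iff] at hsplit
  have hmx : m ∣ x := (ZMod.natCast_eq_zero_iff x m).1 hsplit.1.symm
  have hny : n ∣ y := (ZMod.natCast_eq_zero_iff y n).1 hsplit.2.symm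
  -- coprimality: x = 0 or y = 0
  have hcases : x = 0 ∨ y = 0 := by
    have hnx : n ∣ x := by
      have h1 : n ∣ x + y := by rw [hxy]; exact dvd_mul_left n m
      exact (Nat.dvd_add_iff_left hny).mpr h1
    have hmnx : m * n ∣ x := Nat.Coprime.mul_dvd_of_dvd_of_dvd hg hmx hnx
    have hxle : x ≤ m * n := by omega
    rcases Nat.eq_zero_or_pos x with h0 | hpos
    · exact Or.inl h0
    · right
      have := Nat.le_of_dvd hpos hmnx
      omega
  -- in either case, all steps are equal, so one coordinate is constant
  rcases hcases with h0 | h0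
  · -- x = 0 : all steps are (0,1), first coordinate constant
    have hall : ∀ i, f (i + 1) = f i + ((0 : ZMod m), (1 : ZMod n)) := by
      intro i
      rcases hstep i with h1 | h2
      · exfalso
        have hmem : i ∈ Finset.univ.filter p := Finset.mem_filter.2 ⟨Finset.mem_univ i, h1⟩
        have hpos : 0 < x := Finset.card_pos.2 ⟨i, hmem⟩
        omega
      · exact h2
    obtain ⟨a, ha⟩ := exists_ne ((f 0).1)
    have : ((a, (f 0).2) : ZMod m × ZMod n) ∈ Set.range f := by rw [hrange]; trivial
    obtain ⟨i, hi⟩ := this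
    obtain ⟨k, hk⟩ := all_steps_const f _ hall i
    apply ha
    have := congrArg Prod.fst hk
    simp only [Prod.fst_add, Prod.smul_fst, smul_zero, add_zero] at this
    rw [hi] at this
    exact this
  · -- y = 0 : all steps are (1,0), second coordinate constant
    have hall : ∀ i, f (i + 1) = f i + ((1 : ZMod m), (0 : ZMod n)) := by
      intro i
      by_contra hcon
      have : i ∈ Finset.univ.filter (fun i => ¬ p i) :=
        Finset.mem_filter.2 ⟨Finset.mem_univ i, hcon⟩
      have hpos : 0 < y := Finset.card_pos.2 ⟨i, this⟩
      omega
    obtain ⟨b, hb⟩ := exists_ne ((f 0).2)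
    have : (((f 0).1, b) : ZMod m × ZMod n) ∈ Set.range f := by rw [hrange]; trivial
    obtain ⟨i, hi⟩ := this
    obtain ⟨k, hk⟩ := all_steps_const f _ hall i
    apply hb
    have := congrArg Prod.snd hk
    simp only [Prod.snd_add, Prod.smul_snd, smul_zero, add_zero] at this
    rw [hi] at this
    exact this
end
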